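/- arXiv:2204.05163 — 2 statements merged into one kernel-verified Lean document; each statement's English description precedes it below -/
import Mathlib

section
/- Let m ≥ 1 be an integer, let I be a nonempty subset of {1,…,m} and let i ∈ I. Let f : ℂ^m → ℂ be a Lebesgue-measurable function and suppose there exist N ∈ ℕ and C ≥ 0 such that |f(w)| ≤ C · L(w)^{-N} for all w ∈ P_m. Then for every fixed z ∈ P_m, the function w ↦ |z_i − w_i| · |f(w)| / ( ‖z − w‖^{2m} · |w_I| ) is integrable on P_m with respect to Lebesgue measure (i.e., the integral ∫_{P_m} |z_i − w_i| · |f(w)| / ( ‖z − w‖^{2m} · |w_I| ) dλ(w) is finite). -/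
open MeasureTheory Finset Real

noncomputable section

/-- The punctured polydisc `{w ∈ ℂ^m : 0 < |w_j| ≤ 1/2 for all j}`. -/
def PD (m : ℕ) : Set (Fin m → ℂ) :=
  {w | ∀ j, 0 < ‖w j‖ ∧ ‖w j‖ ≤ 1 / 2}

/-- `L(w) = ∏_j (−log |w_j|)`. -/
def Lfun {m : ℕ} (w : Fin m → ℂ) : ℝ :=
  ∏ j : Fin m, (-Real.log (‖w j‖))

/-- `|w_S| = ∏_{j ∈ S} |w_j|`. -/
def prodAbs {m : ℕ} (S : Finset (Fin m)) (w : Fin m → ℂ) : ℝ :=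
  ∏ j ∈ S, ‖w j‖

/-- The Euclidean norm `‖z − w‖ = (∑_j |z_j − w_j|²)^{1/2}`. -/
def eDist {m : ℕ} (z w : Fin m → ℂ) : ℝ :=
  Real.sqrt (∑ j : Fin m, ‖z j - w j‖ ^ 2)

lemma lemA (c : ℂ) {R : ℝ} (hR : 0 < R) {e : ℝ} (h0 : 0 ≤ e) (h2 : e < 2) :
    IntegrableOn (fun x : ℂ => ‖x - c‖ ^ (-e)) (Metric.closedBall c R) volume := by
  have hmeas : Measurable fun x : ℂ => ‖x - c‖ ^ (-e) := by fun_prop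
  refine ⟨hmeas.aestronglyMeasurable, ?_⟩
  rw [hasFiniteIntegral_iff_norm]
  set A : ℕ → Set ℂ := fun k =>
    Metric.closedBall c (R / 2 ^ k) \ Metric.closedBall c (R / 2 ^ (k + 1)) with hA
  have hsub : Metric.closedBall c R ⊆ {c} ∪ ⋃ k, A k := by
    intro x hx
    rcases eq_or_ne x c with h | h
    · exact Or.inl h
    · right
      have hd : 0 < dist x c := dist_pos.2 h
      have hex : ∃ k : ℕ, R / 2 ^ (k + 1) < dist x c := by
        obtain ⟨n, hn⟩ := exists_pow_lt_of_lt_one (div_pos hd hR)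
          (by norm_num : (1 : ℝ) / 2 < 1)
        refine ⟨n, ?_⟩
        have h3 : R * (1 / 2) ^ n < dist x c := by
          rw [← lt_div_iff₀' hR]; exact hn
        have h1 : R / 2 ^ (n + 1) < R / 2 ^ n := by
          apply div_lt_div_of_pos_left hR (by positivity)
          exact pow_lt_pow_right₀ (by norm_num) (Nat.lt_succ_self n)
        calc R / 2 ^ (n + 1) < R / 2 ^ n := h1
          _ = R * (1 / 2) ^ n := by rw [div_pow, one_pow, div_eq_mul_one_div, one_div]
          _ < dist x c := h3
      classical
      refine Set.mem_iUnion.2 ⟨Nat.find hex, Metric.mem_closedBall.2 ?_,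
        fun hmem => absurd (Metric.mem_closedBall.1 hmem) (not_le.2 (Nat.find_spec hex))⟩
      cases hk : Nat.find hex with
      | zero => simpa using Metric.mem_closedBall.1 hx
      | succ k' =>
        have hmin := Nat.find_min hex (by omega : k' < Nat.find hex)
        exact le_of_not_gt hmin
  have key : ∀ k : ℕ, ∫⁻ x in A k, ENNReal.ofReal ‖‖x - c‖ ^ (-e)‖ ≤
      ENNReal.ofReal ((π * 4 * (R / 2) ^ (2 - e)) * ((1 / 2 : ℝ) ^ (2 - e)) ^ k) := by
    intro k
    have hr : (0:ℝ) < R / 2 ^ (k + 1) := by positivity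
    have hAm : MeasurableSet (A k) :=
      measurableSet_closedBall.diff measurableSet_closedBall
    have hb : ∀ x ∈ A k, ENNReal.ofReal ‖‖x - c‖ ^ (-e)‖ ≤
        ENNReal.ofReal ((R / 2 ^ (k + 1)) ^ (-e)) := by
      intro x hx
      apply ENNReal.ofReal_le_ofReal
      rw [Real.norm_of_nonneg (Real.rpow_nonneg (norm_nonneg _) _)]
      have hge : R / 2 ^ (k + 1) ≤ ‖x - c‖ := by
        have h5 := hx.2
        rw [Metric.mem_closedBall, not_le] at h5
        simpa [dist_eq_norm] using h5.le
      exact Real.rpow_le_rpow_of_nonpos hr hge (neg_nonpos.2 h0)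
    calc ∫⁻ x in A k, ENNReal.ofReal ‖‖x - c‖ ^ (-e)‖
        ≤ ∫⁻ _ in A k, ENNReal.ofReal ((R / 2 ^ (k + 1)) ^ (-e)) :=
          setLIntegral_mono' hAm hb
      _ = ENNReal.ofReal ((R / 2 ^ (k + 1)) ^ (-e)) * volume (A k) := by
          rw [setLIntegral_const]
      _ ≤ ENNReal.ofReal ((R / 2 ^ (k + 1)) ^ (-e)) *
            volume (Metric.closedBall c (R / 2 ^ k)) := by
          gcongr
          exact Set.diff_subset
      _ ≤ ENNReal.ofReal ((π * 4 * (R / 2) ^ (2 - e)) * ((1 / 2 : ℝ) ^ (2 - e)) ^ k) := by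
          rw [Complex.volume_closedBall, ← ENNReal.ofReal_pow (by positivity),
            ← ENNReal.ofReal_coe_nnreal, ← ENNReal.ofReal_mul (by positivity),
            ← ENNReal.ofReal_mul (by positivity)]
          apply ENNReal.ofReal_le_ofReal
          have hrk : R / 2 ^ (k + 1) = (R / 2) * (1 / 2) ^ k := by
            rw [pow_succ]; ring_nf; simp only [one_div]
          have h2k : R / 2 ^ k = 2 * ((R / 2) * (1 / 2) ^ k) := by
            ring_nf; simp only [one_div]
          rw [hrk, h2k]
          have hx0 : (0:ℝ) < (R / 2) * (1 / 2) ^ k := by positivity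
          set r : ℝ := (R / 2) * (1 / 2) ^ k with hrdef
          have e1 : r ^ (-e) * r ^ (2:ℝ) = r ^ (2 - e) := by
            rw [← Real.rpow_add hx0, neg_add_eq_sub]
          have e2 : r ^ (2 - e) = (R/2)^(2-e) * (((1/2:ℝ))^(2-e))^k := by
            rw [hrdef, Real.mul_rpow (by positivity) (by positivity),
              ← Real.rpow_natCast (1/2:ℝ) k, ← Real.rpow_mul (by norm_num),
              mul_comm (k:ℝ) (2-e), Real.rpow_mul (by norm_num), Real.rpow_natCast]
          have e3 : r ^ (-e) * ((2 * r) ^ 2 * (NNReal.pi : ℝ)) =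
              π * 4 * (r ^ (-e) * r ^ (2:ℝ)) := by
            rw [Real.rpow_two, NNReal.coe_real_pi]; ring
          rw [e3, e1, e2]
          exact le_of_eq (by ring)
  calc ∫⁻ x in Metric.closedBall c R, ENNReal.ofReal ‖‖x - c‖ ^ (-e)‖
      ≤ ∫⁻ x in {c} ∪ ⋃ k, A k, ENNReal.ofReal ‖‖x - c‖ ^ (-e)‖ :=
        lintegral_mono_set hsub
    _ ≤ (∫⁻ x in {c}, ENNReal.ofReal ‖‖x - c‖ ^ (-e)‖) +
        ∫⁻ x in ⋃ k, A k, ENNReal.ofReal ‖‖x - c‖ ^ (-e)‖ := lintegral_union_le _ _ _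
    _ ≤ 0 + ∑' k, ∫⁻ x in A k, ENNReal.ofReal ‖‖x - c‖ ^ (-e)‖ := by
        gcongr
        · exact le_of_eq (setLIntegral_measure_zero _ _ (measure_singleton c))
        · exact lintegral_iUnion_le _ _
    _ ≤ 0 + ∑' k : ℕ, ENNReal.ofReal
          ((π * 4 * (R / 2) ^ (2 - e)) * ((1 / 2 : ℝ) ^ (2 - e)) ^ k) := by
        gcongr with k
        exact key k
    _ < ⊤ := by
        rw [zero_add]
        have hq1 : ((1 / 2 : ℝ) ^ (2 - e)) < 1 :=
          Real.rpow_lt_one (by norm_num) (by norm_num) (by linarith)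
        have hq0 : (0:ℝ) ≤ (1 / 2 : ℝ) ^ (2 - e) := Real.rpow_nonneg (by norm_num) _
        have hK0 : (0:ℝ) ≤ π * 4 * (R / 2) ^ (2 - e) := by positivity
        simp_rw [ENNReal.ofReal_mul hK0, ENNReal.ofReal_pow hq0]
        rw [ENNReal.tsum_mul_left, ENNReal.tsum_geometric]
        apply ENNReal.mul_lt_top ENNReal.ofReal_lt_top
        rw [ENNReal.inv_lt_top]
        rw [tsub_pos_iff_lt]
        exact ENNReal.ofReal_lt_one.2 hq1

lemma lemB (c : ℂ) (hc : c ≠ 0) (hcle : ‖c‖ ≤ 1 / 2) {e : ℝ} (h0 : 0 ≤ e) (h2 : e < 2)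
    {d : ℝ} (hd0 : 0 ≤ d) (hd2 : d < 2) :
    IntegrableOn (fun x : ℂ => ‖c - x‖ ^ (-e) * ‖x‖ ^ (-d))
      (Metric.closedBall (0 : ℂ) (1 / 2)) volume := by
  have hρ : (0:ℝ) < ‖c‖ / 2 := div_pos (norm_pos_iff.2 hc) two_pos
  set ρ : ℝ := ‖c‖ / 2 with hρdef
  set S1 : Set ℂ := Metric.closedBall (0:ℂ) (1/2) ∩ Metric.ball c ρ with hS1
  set S2 : Set ℂ := Metric.closedBall (0:ℂ) (1/2) \ Metric.ball c ρ with hS2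
  have hS1m : MeasurableSet S1 := measurableSet_closedBall.inter measurableSet_ball
  have hS2m : MeasurableSet S2 := measurableSet_closedBall.diff measurableSet_ball
  have hmeas : Measurable fun x : ℂ => ‖c - x‖ ^ (-e) * ‖x‖ ^ (-d) := by fun_prop
  have hnn : ∀ x : ℂ, 0 ≤ ‖c - x‖ ^ (-e) * ‖x‖ ^ (-d) := fun x =>
    mul_nonneg (Real.rpow_nonneg (norm_nonneg _) _) (Real.rpow_nonneg (norm_nonneg _) _)
  have hunion : S1 ∪ S2 = Metric.closedBall (0:ℂ) (1/2) := Set.inter_union_diff _ _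
  rw [← hunion]
  apply IntegrableOn.union
  · -- near c : bound by ρ^(-d) * ‖x - c‖^(-e)
    have hball : S1 ⊆ Metric.closedBall c 1 := by
      intro x hx
      have h1 : ‖x‖ ≤ 1/2 := by simpa [Metric.mem_closedBall, dist_zero_right] using hx.1
      have : dist x c ≤ ‖x‖ + ‖c‖ := by
        rw [dist_eq_norm]; exact (norm_sub_le _ _)
      rw [Metric.mem_closedBall]
      linarith
    have hint : IntegrableOn (fun x : ℂ => ρ ^ (-d) * ‖x - c‖ ^ (-e)) S1 volume :=
      (((lemA c one_pos h0 h2).mono_set hball).const_mul _)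
    refine Integrable.mono' hint hmeas.aestronglyMeasurable ?_
    refine (ae_restrict_iff' hS1m).2 (ae_of_all _ fun x hx => ?_)
    rw [Real.norm_of_nonneg (hnn x), norm_sub_rev]
    apply mul_le_mul_of_nonneg_left _ (Real.rpow_nonneg (norm_nonneg _) _) |>.trans
      (le_of_eq (mul_comm _ _))
    · -- ‖x‖ ^ (-d) ≤ ρ ^ (-d)
      have hxge : ρ ≤ ‖x‖ := by
        have h2' : dist x c < ρ := Metric.mem_ball.1 hx.2
        have : ‖c‖ - ‖x‖ ≤ dist x c := by
          rw [dist_eq_norm, norm_sub_rev]; exact norm_sub_norm_le _ _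
        rw [hρdef] at h2' ⊢
        linarith
      exact Real.rpow_le_rpow_of_nonpos hρ hxge (neg_nonpos.2 hd0)
  · -- away from c : bound by ρ^(-e) * ‖x - 0‖^(-d)
    have hint : IntegrableOn (fun x : ℂ => ρ ^ (-e) * ‖x - 0‖ ^ (-d)) S2 volume :=
      ((lemA (0:ℂ) (by norm_num : (0:ℝ) < 1/2) hd0 hd2).mono_set Set.diff_subset).const_mul _
    refine Integrable.mono' hint hmeas.aestronglyMeasurable ?_
    refine (ae_restrict_iff' hS2m).2 (ae_of_all _ fun x hx => ?_)
    rw [Real.norm_of_nonneg (hnn x), sub_zero]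
    apply mul_le_mul_of_nonneg_right _ (Real.rpow_nonneg (norm_nonneg _) _)
    have hxge : ρ ≤ ‖c - x‖ := by
      have h2' : ¬ dist x c < ρ := fun h => hx.2 (Metric.mem_ball.2 h)
      rw [not_lt, dist_eq_norm, norm_sub_rev] at h2'
      exact h2'
    exact Real.rpow_le_rpow_of_nonpos hρ hxge (neg_nonpos.2 h0)

theorem statement1 (m : ℕ) (hm : 1 ≤ m)
    (I : Finset (Fin m)) (hI : I.Nonempty) (i : Fin m) (hi : i ∈ I)
    (f : (Fin m → ℂ) → ℂ) (hf : Measurable f)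
    (N : ℕ) (C : ℝ) (hC : 0 ≤ C)
    (hbound : ∀ w ∈ PD m, ‖f w‖ ≤ C * Lfun w ^ (-(N : ℝ)))
    (z : Fin m → ℂ) (hz : z ∈ PD m) :
    IntegrableOn
      (fun w => ‖z i - w i‖ * ‖f w‖ /
        (eDist z w ^ (2 * m) * prodAbs I w)) (PD m) volume := by
  classical
  have hm0 : (0:ℝ) < m := by exact_mod_cast hm
  set e : ℝ := 2 - 1 / m with he
  have h0e : 0 ≤ e := by
    have h1 : 1 / (m:ℝ) ≤ 1 := by
      rw [div_le_one hm0]; exact_mod_cast hm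
    rw [he]; linarith
  have he2 : e < 2 := by
    have : 0 < 1 / (m:ℝ) := by positivity
    rw [he]; linarith
  set M : ℝ := (Real.log 2 ^ m) ^ (-(N:ℝ)) with hM
  have hLB : (0:ℝ) < Real.log 2 ^ m := pow_pos (Real.log_pos one_lt_two) m
  have hM0 : 0 ≤ M := Real.rpow_nonneg hLB.le _
  set CL : ℝ := C * M with hCL
  have hCL0 : 0 ≤ CL := mul_nonneg hC hM0
  have hz : ∀ j, 0 < ‖z j‖ ∧ ‖z j‖ ≤ 1 / 2 := hz
  have hzj0 : ∀ j, z j ≠ 0 := fun j => by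
    have := (hz j).1
    rw [norm_pos_iff] at this
    exact this
  have hzj2 : ∀ j, ‖z j‖ ≤ 1/2 := fun j => by
    exact (hz j).2
  set g : Fin m → ℂ → ℝ :=
    fun j x => ‖z j - x‖ ^ (-e) * (if j ∈ I then ‖x‖ ^ (-(1:ℝ)) else 1) with hg
  set G : Fin m → ℂ → ℝ := fun j => (Metric.closedBall (0:ℂ) (1/2)).indicator (g j) with hG
  have hGint : ∀ j, Integrable (G j) volume := by
    intro j
    rw [hG, integrable_indicator_iff measurableSet_closedBall]
    by_cases hjI : j ∈ I
    · simp only [hg, hjI, if_true]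
      exact lemB (z j) (hzj0 j) (hzj2 j) h0e he2 (by norm_num) (by norm_num)
    · simp only [hg, hjI, if_false, mul_one]
      have hsub : Metric.closedBall (0:ℂ) (1/2) ⊆ Metric.closedBall (z j) 1 := by
        intro x hx
        have h1 : ‖x‖ ≤ 1/2 := by simpa [Metric.mem_closedBall, dist_zero_right] using hx
        have h2' : dist x (z j) ≤ ‖x‖ + ‖z j‖ := by
          rw [dist_eq_norm]; exact norm_sub_le _ _
        rw [Metric.mem_closedBall]
        have := hzj2 j
        linarith
      have := (lemA (z j) one_pos h0e he2).mono_set hsub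
      simpa only [norm_sub_rev] using this
  have hBint : Integrable (fun w : Fin m → ℂ => CL * ∏ j, G j (w j)) volume :=
    (Integrable.fintype_prod (f := fun j => G j) hGint).const_mul CL
  -- measurability of the integrand
  have hEcont : Continuous (fun w : Fin m → ℂ => eDist z w) := by
    apply Real.continuous_sqrt.comp
    exact continuous_finset_sum _ fun j _ =>
      (continuous_norm.comp (continuous_const.sub (continuous_apply j))).pow 2
  have hPcont : Continuous (fun w : Fin m → ℂ => prodAbs I w) :=
    continuous_finset_prod _ fun j _ => continuous_norm.comp (continuous_apply j)
  have hFmeas : Measurable (fun w : Fin m → ℂ => ‖z i - w i‖ * ‖f w‖ /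
      (eDist z w ^ (2 * m) * prodAbs I w)) := by
    apply Measurable.div
    · exact (continuous_norm.measurable.comp (measurable_const.sub (measurable_pi_apply i))).mul
        (continuous_norm.measurable.comp hf)
    · exact ((hEcont.measurable).pow_const _).mul hPcont.measurable
  have hPDm : MeasurableSet (PD m) := by
    have hrw : PD m = ⋂ j, ((fun w : Fin m → ℂ => ‖w j‖) ⁻¹' (Set.Ioc 0 (1/2))) := by
      ext w; simp [PD, Set.mem_iInter, Set.mem_Ioc]
    rw [hrw]
    exact MeasurableSet.iInter fun j =>
      (continuous_norm.measurable.comp (measurable_pi_apply j)) measurableSet_Ioc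
  have hne_ae : ∀ᵐ w : Fin m → ℂ, ∀ j, w j ≠ z j := by
    rw [ae_all_iff]
    intro j
    rw [volume_pi]
    exact Measure.ae_eval_ne (fun _ : Fin m => (volume : Measure ℂ)) j (z j)
  refine Integrable.mono' hBint.integrableOn hFmeas.aestronglyMeasurable ?_
  filter_upwards [ae_restrict_of_ae hne_ae, self_mem_ae_restrict hPDm] with w hne hw
  have hw : ∀ j, 0 < ‖w j‖ ∧ ‖w j‖ ≤ 1 / 2 := hw
  -- pointwise inequality
  set a : Fin m → ℝ := fun j => ‖z j - w j‖ with ha_def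
  have ha : ∀ j, 0 < a j := fun j =>
    norm_pos_iff.2 (sub_ne_zero.2 (Ne.symm (hne j)))
  set E : ℝ := eDist z w with hE_def
  have hEsum : (0:ℝ) < ∑ j, a j ^ 2 :=
    Finset.sum_pos (fun j _ => pow_pos (ha j) 2) ⟨i, mem_univ i⟩
  have hE : 0 < E := Real.sqrt_pos.2 hEsum
  have haE : ∀ j, a j ≤ E := by
    intro j
    have h1 : a j ^ 2 ≤ ∑ j', a j' ^ 2 :=
      Finset.single_le_sum (fun j' _ => sq_nonneg (a j')) (mem_univ j)
    calc a j = Real.sqrt (a j ^ 2) := (Real.sqrt_sq (ha j).le).symm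
      _ ≤ E := Real.sqrt_le_sqrt h1
  have hwj0 : ∀ j, 0 < ‖w j‖ := fun j => (hw j).1
  have hP : 0 < prodAbs I w := Finset.prod_pos fun j _ => hwj0 j
  have hGw : ∀ j, G j (w j) = g j (w j) := fun j => Set.indicator_of_mem (by
    rw [Metric.mem_closedBall, dist_zero_right]
    exact (hw j).2) _
  have hprod : ∏ j, g j (w j) = (∏ j, a j ^ (-e)) * (prodAbs I w)⁻¹ := by
    have h1 : ∀ j, g j (w j) = a j ^ (-e) * (if j ∈ I then (‖w j‖)⁻¹ else 1) := by
      intro j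
      rw [hg]
      simp only [Real.rpow_neg_one, ha_def]
    rw [Finset.prod_congr rfl (fun j _ => h1 j), Finset.prod_mul_distrib,
      Finset.prod_ite_mem, Finset.univ_inter, Finset.prod_inv_distrib]
    rfl
  have hfw : ‖f w‖ ≤ CL := by
    refine (hbound w hw).trans ?_
    rw [hCL, hM]
    apply mul_le_mul_of_nonneg_left _ hC
    apply Real.rpow_le_rpow_of_nonpos hLB _ (by simp : -(N:ℝ) ≤ 0)
    have hterm : ∀ j ∈ univ, Real.log 2 ≤ -Real.log (‖w j‖) := by
      intro j _
      have h1 : Real.log (‖w j‖) ≤ Real.log (1/2) :=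
        Real.log_le_log (hwj0 j) (hw j).2
      rw [one_div, Real.log_inv] at h1
      linarith
    calc Real.log 2 ^ m = ∏ _j : Fin m, Real.log 2 := by
          rw [prod_const, card_univ, Fintype.card_fin]
      _ ≤ Lfun w := Finset.prod_le_prod (fun j _ => (Real.log_pos one_lt_two).le) hterm
  have step3 : a i / E ^ (2 * m) ≤ ∏ j, a j ^ (-e) := by
    have hQ : 0 < ∏ j, a j ^ e :=
      Finset.prod_pos fun j _ => Real.rpow_pos_of_pos (ha j) e
    have hD : (0:ℝ) < E ^ (2 * m) := pow_pos hE _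
    have hrw : ∏ j, a j ^ (-e) = (∏ j, a j ^ e)⁻¹ := by
      rw [← Finset.prod_inv_distrib]
      exact Finset.prod_congr rfl fun j _ => by rw [← Real.rpow_neg (ha j).le]
    rw [hrw, inv_eq_one_div, div_le_div_iff₀ hD hQ, one_mul]
    have h1 : ∏ j, a j ^ e ≤ E ^ (e * m) := by
      calc ∏ j, a j ^ e ≤ ∏ _j : Fin m, E ^ e :=
            Finset.prod_le_prod (fun j _ => Real.rpow_nonneg (ha j).le e)
              (fun j _ => Real.rpow_le_rpow (ha j).le (haE j) h0e)
        _ = (E ^ e) ^ (m:ℕ) := by rw [prod_const, card_univ, Fintype.card_fin]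
        _ = E ^ (e * m) := by
            rw [← Real.rpow_natCast (E ^ e) m, ← Real.rpow_mul hE.le]
    calc a i * ∏ j, a j ^ e ≤ E * E ^ (e * m) :=
          mul_le_mul (haE i) h1
            (Finset.prod_nonneg fun j _ => Real.rpow_nonneg (ha j).le e) hE.le
      _ = E ^ (1 + e * m) := by rw [Real.rpow_add hE, Real.rpow_one]
      _ = E ^ ((2 * m : ℕ) : ℝ) := by
          have hexp : 1 + e * m = ((2 * m : ℕ) : ℝ) := by
            rw [he]; push_cast; field_simp; ring
          rw [hexp]
      _ = E ^ (2 * m) := Real.rpow_natCast E (2 * m)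
  -- assemble
  have hFnn : 0 ≤ a i * ‖f w‖ / (E ^ (2 * m) * prodAbs I w) :=
    div_nonneg (mul_nonneg (ha i).le (norm_nonneg _))
      (mul_nonneg (pow_nonneg hE.le _) hP.le)
  calc ‖‖z i - w i‖ * ‖f w‖ / (eDist z w ^ (2 * m) * prodAbs I w)‖
      = a i * ‖f w‖ / (E ^ (2 * m) * prodAbs I w) := Real.norm_of_nonneg hFnn
    _ ≤ a i * CL / (E ^ (2 * m) * prodAbs I w) := by
        have hden : 0 < E ^ (2 * m) * prodAbs I w := mul_pos (pow_pos hE _) hP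
        have h2 := mul_le_mul_of_nonneg_right (mul_le_mul_of_nonneg_left hfw (ha i).le)
          (inv_nonneg.2 hden.le)
        simpa [div_eq_mul_inv] using h2
    _ = CL * ((a i / E ^ (2 * m)) * (prodAbs I w)⁻¹) := by ring
    _ ≤ CL * ((∏ j, a j ^ (-e)) * (prodAbs I w)⁻¹) := by
        apply mul_le_mul_of_nonneg_left _ hCL0
        exact mul_le_mul_of_nonneg_right step3 (inv_nonneg.2 hP.le)
    _ = CL * ∏ j, G j (w j) := by
        have h1 : ∏ j, G j (w j) = ∏ j, g j (w j) := Finset.prod_congr rfl fun j _ => hGw j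
        rw [h1, hprod]

end
end

section
/- Let N ≥ 0 be an integer and let z ∈ ℂ with 0 < |z| ≤ 1/2. Then ∫_{ {w ∈ ℂ : 0 < |w| ≤ |z|/2} } (−log|w|)^{−N} / ( |z − w| · |w| ) dλ(w) ≤ 2π · (−log|z|)^{−N}. -/
open MeasureTheory Set

/-- Layer-cake bound: the lintegral of `‖w‖⁻¹` over the punctured disc of radius `r`
is at most `2 π r`. -/
lemma lintegral_inv_abs_le (r : ℝ) (hr : 0 < r) :
    (∫⁻ w in {w : ℂ | 0 < ‖w‖ ∧ ‖w‖ ≤ r},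
        ENNReal.ofReal ((‖w‖)⁻¹)) ≤ ENNReal.ofReal (2 * Real.pi * r) := by
  set T : Set ℂ := {w : ℂ | 0 < ‖w‖ ∧ ‖w‖ ≤ r} with hTdef
  have hT : MeasurableSet T := by
    have : T = (fun w : ℂ => ‖w‖) ⁻¹' (Ioc 0 r) := by ext w; simp [hTdef, Set.mem_Ioc]
    rw [this]
    exact continuous_norm.measurable measurableSet_Ioc
  have hmeas : AEMeasurable (fun w : ℂ => (‖w‖)⁻¹) (volume.restrict T) :=
    (continuous_norm.measurable.inv).aemeasurable
  rw [lintegral_eq_lintegral_meas_le (volume.restrict T)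
    (Filter.Eventually.of_forall fun w => inv_nonneg.2 (norm_nonneg w)) hmeas]
  -- pointwise bound on the measure of superlevel sets
  have hstep : ∀ t ∈ Ioi (0:ℝ),
      (volume.restrict T) {w : ℂ | t ≤ (‖w‖)⁻¹}
        ≤ ENNReal.ofReal (Real.pi * (min r t⁻¹) ^ 2) := by
    intro t ht
    rw [Measure.restrict_apply' hT]
    have hsub : {w : ℂ | t ≤ (‖w‖)⁻¹} ∩ T ⊆ Metric.closedBall 0 (min r t⁻¹) := by
      rintro w ⟨hw1, hw2, hw3⟩
      have habs : ‖w‖ ≤ t⁻¹ := by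
        rw [← mul_le_mul_iff_of_pos_right (a := t) ht, inv_mul_cancel₀ (ne_of_gt ht)]
        calc ‖w‖ * t ≤ ‖w‖ * (‖w‖)⁻¹ := by
              exact mul_le_mul_of_nonneg_left hw1 (norm_nonneg w)
          _ = 1 := mul_inv_cancel₀ (ne_of_gt hw2)
      simp only [Metric.mem_closedBall, dist_zero_right, le_min_iff]
      exact ⟨hw3, habs⟩
    calc volume ({w : ℂ | t ≤ (‖w‖)⁻¹} ∩ T)
        ≤ volume (Metric.closedBall (0:ℂ) (min r t⁻¹)) := measure_mono hsub
      _ = ENNReal.ofReal (min r t⁻¹) ^ 2 * NNReal.pi := Complex.volume_closedBall 0 _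
      _ = ENNReal.ofReal (Real.pi * (min r t⁻¹) ^ 2) := by
          rw [← ENNReal.ofReal_pow (le_min hr.le (inv_nonneg.2 (le_of_lt ht))),
            ← ENNReal.ofReal_coe_nnreal, NNReal.coe_real_pi,
            ← ENNReal.ofReal_mul (sq_nonneg _), mul_comm]
  calc (∫⁻ t in Ioi (0:ℝ), (volume.restrict T) {w : ℂ | t ≤ (‖w‖)⁻¹})
      ≤ ∫⁻ t in Ioi (0:ℝ), ENNReal.ofReal (Real.pi * (min r t⁻¹) ^ 2) :=
        setLIntegral_mono' measurableSet_Ioi hstep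
    _ ≤ ENNReal.ofReal (2 * Real.pi * r) := by
        have hsplit : Ioi (0:ℝ) = Ioc 0 r⁻¹ ∪ Ioi r⁻¹ := (Ioc_union_Ioi_eq_Ioi (by positivity)).symm
        rw [hsplit, lintegral_union measurableSet_Ioi Ioc_disjoint_Ioi_same]
        have h1 : (∫⁻ t in Ioc (0:ℝ) r⁻¹, ENNReal.ofReal (Real.pi * (min r t⁻¹) ^ 2))
            ≤ ENNReal.ofReal (Real.pi * r) := by
          calc (∫⁻ t in Ioc (0:ℝ) r⁻¹, ENNReal.ofReal (Real.pi * (min r t⁻¹) ^ 2))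
              ≤ ∫⁻ _ in Ioc (0:ℝ) r⁻¹, ENNReal.ofReal (Real.pi * r ^ 2) := by
                refine setLIntegral_mono' measurableSet_Ioc fun t ht => ?_
                refine ENNReal.ofReal_le_ofReal ?_
                have : (min r t⁻¹) ^ 2 ≤ r ^ 2 := by
                  have h0 : 0 ≤ min r t⁻¹ := le_min hr.le (inv_nonneg.2 ht.1.le)
                  exact pow_le_pow_left₀ h0 (min_le_left _ _) 2
                nlinarith [Real.pi_pos]
            _ = ENNReal.ofReal (Real.pi * r ^ 2) * volume (Ioc (0:ℝ) r⁻¹) := by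
                rw [setLIntegral_const]
            _ = ENNReal.ofReal (Real.pi * r) := by
                rw [Real.volume_Ioc, ← ENNReal.ofReal_mul (by positivity)]
                congr 1
                field_simp
                ring
        have h2 : (∫⁻ t in Ioi r⁻¹, ENNReal.ofReal (Real.pi * (min r t⁻¹) ^ 2))
            ≤ ENNReal.ofReal (Real.pi * r) := by
          have hint : IntegrableOn (fun t : ℝ => Real.pi * t ^ (-2 : ℝ)) (Ioi r⁻¹) :=
            (integrableOn_Ioi_rpow_of_lt (by norm_num) (by positivity)).const_mul _
          have hval : (∫ t in Ioi r⁻¹, Real.pi * t ^ (-2 : ℝ)) = Real.pi * r := by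
            have hrw : (r⁻¹ : ℝ) ^ ((-2 : ℝ) + 1) = r⁻¹⁻¹ := by
              norm_num [Real.rpow_neg_one]
            rw [MeasureTheory.integral_const_mul, integral_Ioi_rpow_of_lt (by norm_num)
              (by positivity), hrw, inv_inv]
            ring
          calc (∫⁻ t in Ioi r⁻¹, ENNReal.ofReal (Real.pi * (min r t⁻¹) ^ 2))
              ≤ ∫⁻ t in Ioi r⁻¹, ENNReal.ofReal (Real.pi * t ^ (-2 : ℝ)) := by
                refine setLIntegral_mono' measurableSet_Ioi fun t ht => ?_
                refine ENNReal.ofReal_le_ofReal ?_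
                have ht0 : (0:ℝ) < t := lt_trans (by positivity) ht
                have h2' : t ^ (-2 : ℝ) = (t⁻¹) ^ 2 := by
                  rw [show (-2 : ℝ) = -((2 : ℕ) : ℝ) by norm_num, Real.rpow_neg ht0.le,
                    Real.rpow_natCast, inv_pow]
                rw [h2']
                have h0 : 0 ≤ min r t⁻¹ := le_min hr.le (inv_nonneg.2 ht0.le)
                have : (min r t⁻¹) ^ 2 ≤ (t⁻¹) ^ 2 := pow_le_pow_left₀ h0 (min_le_right _ _) 2
                nlinarith [Real.pi_pos]
            _ = ENNReal.ofReal (∫ t in Ioi r⁻¹, Real.pi * t ^ (-2 : ℝ)) := by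
                rw [ofReal_integral_eq_lintegral_ofReal hint]
                refine (ae_restrict_iff' measurableSet_Ioi).2
                  (Filter.Eventually.of_forall fun t ht => ?_)
                have ht0 : (0:ℝ) < t := lt_trans (by positivity) ht
                positivity
            _ = ENNReal.ofReal (Real.pi * r) := by rw [hval]
        calc _ ≤ ENNReal.ofReal (Real.pi * r) + ENNReal.ofReal (Real.pi * r) := add_le_add h1 h2
          _ = ENNReal.ofReal (2 * Real.pi * r) := by
              rw [← ENNReal.ofReal_add (by positivity) (by positivity)]
              congr 1
              ring

theorem statement8 (N : ℕ) (z : ℂ) (hz0 : 0 < ‖z‖) (hz : ‖z‖ ≤ 1 / 2) :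
    (∫ w in {w : ℂ | 0 < ‖w‖ ∧ ‖w‖ ≤ ‖z‖ / 2},
        (-Real.log (‖w‖)) ^ (-(N : ℝ)) / (‖z - w‖ * ‖w‖)) ≤
      2 * Real.pi * (-Real.log (‖z‖)) ^ (-(N : ℝ)) := by
  set a := ‖z‖ with ha
  set T : Set ℂ := {w : ℂ | 0 < ‖w‖ ∧ ‖w‖ ≤ a / 2} with hTdef
  have hT : MeasurableSet T := by
    have : T = (fun w : ℂ => ‖w‖) ⁻¹' (Ioc 0 (a / 2)) := by ext w; simp [hTdef, Set.mem_Ioc]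
    rw [this]
    exact continuous_norm.measurable measurableSet_Ioc
  have hloga : 0 < -Real.log a := by
    have : Real.log a < 0 := Real.log_neg hz0 (by linarith)
    linarith
  set c : ℝ := (-Real.log a) ^ (-(N : ℝ)) with hc
  have hc0 : 0 ≤ c := Real.rpow_nonneg hloga.le _
  set f : ℂ → ℝ := fun w =>
    (-Real.log (‖w‖)) ^ (-(N : ℝ)) / (‖z - w‖ * ‖w‖) with hf
  set C : ℝ := c * (2 / a) with hC
  have hC0 : 0 ≤ C := mul_nonneg hc0 (by positivity)
  -- pointwise bound on T
  have hbound : ∀ w ∈ T, f w ≤ C * (‖w‖)⁻¹ := by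
    intro w hw
    obtain ⟨hw0, hwr⟩ := hw
    have hwa : ‖w‖ ≤ a := by linarith
    have hlogw : -Real.log a ≤ -Real.log (‖w‖) := by
      have := Real.log_le_log hw0 hwa
      linarith
    have hnum : (-Real.log (‖w‖)) ^ (-(N : ℝ)) ≤ c := by
      rw [hc]
      exact Real.rpow_le_rpow_of_nonpos hloga hlogw (neg_nonpos.2 (Nat.cast_nonneg N))
    have hzw : a / 2 ≤ ‖z - w‖ := by
      have h := norm_sub_norm_le z w
      linarith
    have hdenom : 0 < a / 2 * ‖w‖ := by positivity
    have : f w ≤ c / (a / 2 * ‖w‖) := by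
      refine div_le_div₀ hc0 hnum hdenom ?_
      exact mul_le_mul_of_nonneg_right hzw (norm_nonneg w)
    refine this.trans (le_of_eq ?_)
    rw [hC]
    field_simp
  -- nonnegativity on T
  have hnn : 0 ≤ᵐ[volume.restrict T] f := by
    refine (ae_restrict_iff' hT).2 (Filter.Eventually.of_forall fun w hw => ?_)
    have hw0 := hw.1
    have hwa : ‖w‖ ≤ a / 2 := hw.2
    have : 0 < -Real.log (‖w‖) := by
      have : Real.log (‖w‖) < 0 := Real.log_neg hw0 (by linarith)
      linarith
    have h1 : 0 ≤ (-Real.log (‖w‖)) ^ (-(N : ℝ)) := Real.rpow_nonneg this.le _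
    have h2 : 0 ≤ ‖z - w‖ * ‖w‖ := by positivity
    exact div_nonneg h1 h2
  -- measurability
  have hfm : AEStronglyMeasurable f (volume.restrict T) := by
    have habs : Continuous fun w : ℂ => ‖w‖ := continuous_norm
    have hzwc : Continuous fun w : ℂ => ‖z - w‖ :=
      habs.comp (continuous_const.sub continuous_id)
    have hlog : ContinuousOn (fun w : ℂ => -Real.log (‖w‖)) T :=
      (Real.continuousOn_log.comp habs.continuousOn fun w hw => hw.1.ne').neg
    have hcont : ContinuousOn f T := by
      refine ContinuousOn.div (hlog.rpow_const fun w hw => Or.inl ?_)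
        ((hzwc.continuousOn).mul habs.continuousOn) fun w hw => ?_
      · have hwa : ‖w‖ ≤ a / 2 := hw.2
        have : Real.log (‖w‖) < 0 := Real.log_neg hw.1 (by linarith)
        linarith
      · have h := norm_sub_norm_le z w
        have hwa : ‖w‖ ≤ a / 2 := hw.2
        have : 0 < ‖z - w‖ := by linarith
        exact (mul_pos this hw.1).ne'
    exact hcont.aestronglyMeasurable hT
  rw [integral_eq_lintegral_of_nonneg_ae hnn hfm]
  have key : (∫⁻ w in T, ENNReal.ofReal (f w)) ≤ ENNReal.ofReal (2 * Real.pi * c) := by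
    calc (∫⁻ w in T, ENNReal.ofReal (f w))
        ≤ ∫⁻ w in T, ENNReal.ofReal C * ENNReal.ofReal ((‖w‖)⁻¹) := by
          refine setLIntegral_mono' hT fun w hw => ?_
          rw [← ENNReal.ofReal_mul hC0]
          exact ENNReal.ofReal_le_ofReal (hbound w hw)
      _ = ENNReal.ofReal C * ∫⁻ w in T, ENNReal.ofReal ((‖w‖)⁻¹) :=
          lintegral_const_mul' _ _ ENNReal.ofReal_ne_top
      _ ≤ ENNReal.ofReal C * ENNReal.ofReal (2 * Real.pi * (a / 2)) := by
          gcongr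
          exact lintegral_inv_abs_le (a / 2) (by positivity)
      _ = ENNReal.ofReal (2 * Real.pi * c) := by
          rw [← ENNReal.ofReal_mul hC0]
          congr 1
          rw [hC]
          field_simp
  have := ENNReal.toReal_le_of_le_ofReal (by positivity) key
  linarith [this]
end
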